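/- Let D and D' be n×n real diagonal matrices. Then min_{U ∈ U(n)} ⟨U D U*, D'⟩_F = min_{σ ∈ Sₙ} ⟨P_σ D P_σᵀ, D'⟩_F, where U(n) is the group of n×n unitary matrices, ⟨A,B⟩_F = Tr(AB) is the Frobenius inner product, and P_σ is the permutation matrix of σ ∈ Sₙ. In particular both minima are attained and equal. -/

import Mathlib

open Matrix

private lemma trace_re_eq (n : ℕ) (d d' : Fin n → ℝ) (U : Matrix (Fin n) (Fin n) ℂ) :
    (Matrix.trace (U * Matrix.diagonal (fun i => (d i : ℂ)) * Uᴴ *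
        Matrix.diagonal (fun i => (d' i : ℂ)))).re
      = ∑ i, ∑ j, Complex.normSq (U i j) * (d j * d' i) := by
  simp only [Matrix.trace, Matrix.diag_apply, Matrix.mul_apply, Matrix.diagonal_apply,
    conjTranspose_apply]
  simp only [Finset.sum_ite_eq', Finset.mem_univ, if_true, mul_ite, mul_zero,
    ite_mul, zero_mul, Finset.sum_ite_eq, Complex.re_sum, Finset.sum_mul]
  refine Finset.sum_congr rfl fun i _ => Finset.sum_congr rfl fun j _ => ?_
  have : U i j * (d j : ℂ) * star (U i j) * (d' i : ℂ)
      = ((Complex.normSq (U i j) * (d j * d' i) : ℝ) : ℂ) := by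
    rw [show U i j * (d j : ℂ) * star (U i j) * (d' i : ℂ)
        = U i j * star (U i j) * ((d j : ℂ) * (d' i : ℂ)) by ring,
      Complex.star_def, Complex.mul_conj]
    push_cast; ring
  rw [this, Complex.ofReal_re]

private lemma perm_mul_transpose (n : ℕ) (σ : Equiv.Perm (Fin n)) :
    (σ.permMatrix ℂ) * (σ.permMatrix ℂ)ᵀ = 1 := by
  rw [Equiv.Perm.permMatrix, ← PEquiv.toMatrix_symm, ← Equiv.toPEquiv_symm,
    ← PEquiv.toMatrix_trans, ← Equiv.toPEquiv_trans]
  simp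

private lemma perm_conjTranspose (n : ℕ) (σ : Equiv.Perm (Fin n)) :
    (σ.permMatrix ℂ)ᴴ = (σ.permMatrix ℂ)ᵀ := by
  ext i j
  simp [Equiv.Perm.permMatrix, PEquiv.toMatrix, conjTranspose_apply, apply_ite]

private lemma perm_mem_unitary (n : ℕ) (σ : Equiv.Perm (Fin n)) :
    σ.permMatrix ℂ ∈ Matrix.unitaryGroup (Fin n) ℂ := by
  rw [Matrix.mem_unitaryGroup_iff]
  show σ.permMatrix ℂ * (σ.permMatrix ℂ)ᴴ = 1
  rw [perm_conjTranspose, perm_mul_transpose]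

theorem min_unitaryGroup_eq_min_perm
    (n : ℕ) (d d' : Fin n → ℝ) :
    ∃ r : ℝ,
      IsLeast {x : ℝ | ∃ U ∈ Matrix.unitaryGroup (Fin n) ℂ,
          x = (Matrix.trace (U * Matrix.diagonal (fun i => (d i : ℂ)) * Uᴴ *
            Matrix.diagonal (fun i => (d' i : ℂ)))).re} r ∧
      IsLeast {x : ℝ | ∃ σ : Equiv.Perm (Fin n),
          x = (Matrix.trace (σ.permMatrix ℂ * Matrix.diagonal (fun i => (d i : ℂ)) *
            (σ.permMatrix ℂ)ᵀ * Matrix.diagonal (fun i => (d' i : ℂ)))).re} r := by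
  classical
  -- the linear functional
  set F : Matrix (Fin n) (Fin n) ℝ →ₗ[ℝ] ℝ :=
    { toFun := fun M => ∑ i, ∑ j, M i j * (d j * d' i)
      map_add' := by
        intro A B
        simp [Matrix.add_apply, add_mul, Finset.sum_add_distrib]
      map_smul' := by
        intro c A
        simp [Matrix.smul_apply, Finset.mul_sum, mul_assoc] } with hF
  -- value of F on permutation matrices is the permutation trace
  have hperm_val : ∀ σ : Equiv.Perm (Fin n),
      (Matrix.trace (σ.permMatrix ℂ * Matrix.diagonal (fun i => (d i : ℂ)) *
        (σ.permMatrix ℂ)ᵀ * Matrix.diagonal (fun i => (d' i : ℂ)))).re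
      = F (σ.permMatrix ℝ) := by
    intro σ
    rw [← perm_conjTranspose, trace_re_eq]
    simp only [hF, LinearMap.coe_mk, AddHom.coe_mk]
    refine Finset.sum_congr rfl fun i _ => Finset.sum_congr rfl fun j _ => ?_
    by_cases h : (Equiv.toPEquiv σ) i = some j <;>
      simp [Equiv.Perm.permMatrix, PEquiv.toMatrix, h]
  -- value of F on |U|² matrices is the unitary trace
  have huni_val : ∀ U : Matrix (Fin n) (Fin n) ℂ,
      (Matrix.trace (U * Matrix.diagonal (fun i => (d i : ℂ)) * Uᴴ *
        Matrix.diagonal (fun i => (d' i : ℂ)))).re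
      = F (fun i j => Complex.normSq (U i j)) := by
    intro U
    rw [trace_re_eq]
    rfl
  -- |U|² is doubly stochastic for unitary U
  have hds : ∀ U ∈ Matrix.unitaryGroup (Fin n) ℂ,
      (fun i j => Complex.normSq (U i j)) ∈ doublyStochastic ℝ (Fin n) := by
    intro U hU
    refine (mem_doublyStochastic_iff_sum).mpr ?_
    have h1 : U * Uᴴ = 1 := by
      have := (Matrix.mem_unitaryGroup_iff).mp hU
      exact this
    have h2 : Uᴴ * U = 1 := by
      have := (Matrix.mem_unitaryGroup_iff').mp hU
      exact this
    refine ⟨fun i j => Complex.normSq_nonneg _, fun i => ?_, fun j => ?_⟩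
    · have := congrArg (fun M => (M i i).re) h1
      simpa [Matrix.mul_apply, conjTranspose_apply, Matrix.one_apply, Complex.star_def,
        Complex.mul_conj, Complex.re_sum] using this
    · have := congrArg (fun M => (M j j).re) h2
      simpa [Matrix.mul_apply, conjTranspose_apply, Matrix.one_apply, Complex.star_def,
        Complex.mul_conj, Complex.re_sum, Complex.normSq_apply] using this
  -- minimum over permutations
  have hne : (Finset.univ.image fun σ : Equiv.Perm (Fin n) => F (σ.permMatrix ℝ)).Nonempty :=
    ⟨F ((1 : Equiv.Perm (Fin n)).permMatrix ℝ), Finset.mem_image_of_mem _ (Finset.mem_univ 1)⟩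
  set r : ℝ := (Finset.univ.image fun σ : Equiv.Perm (Fin n) => F (σ.permMatrix ℝ)).min' hne
    with hr
  obtain ⟨σ₀, -, hσ₀⟩ := Finset.mem_image.mp (Finset.min'_mem _ hne)
  have hrle : ∀ σ : Equiv.Perm (Fin n), r ≤ F (σ.permMatrix ℝ) := fun σ =>
    Finset.min'_le _ _ (Finset.mem_image_of_mem _ (Finset.mem_univ σ))
  -- lower bound on doubly stochastic matrices
  have hlb : ∀ M ∈ doublyStochastic ℝ (Fin n), r ≤ F M := by
    intro M hM
    have hmem : M ∈ convexHull ℝ {M | ∃ σ : Equiv.Perm (Fin n), σ.permMatrix ℝ = M} := by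
      rw [← doublyStochastic_eq_convexHull_permMatrix]
      exact hM
    have hsub : convexHull ℝ {M | ∃ σ : Equiv.Perm (Fin n), σ.permMatrix ℝ = M}
        ⊆ {M | r ≤ F M} := by
      refine convexHull_min ?_ (convex_halfSpace_ge F.isLinear r)
      rintro x ⟨σ, rfl⟩
      exact hrle σ
    exact hsub hmem
  refine ⟨r, ⟨⟨σ₀.permMatrix ℂ, perm_mem_unitary n σ₀, ?_⟩, ?_⟩,
    ⟨⟨σ₀, ?_⟩, ?_⟩⟩
  · rw [perm_conjTranspose, hperm_val]
    exact (hσ₀.trans hr.symm).symm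
  · rintro x ⟨U, hU, rfl⟩
    rw [huni_val]
    exact hlb _ (hds U hU)
  · rw [hperm_val]
    exact (hσ₀.trans hr.symm).symm
  · rintro x ⟨σ, rfl⟩
    rw [hperm_val]
    exact hrle σ
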